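/- Let k be an algebraically closed field of characteristic 2 and let 𝔤 be a 2-dimensional Lie algebra over k equipped with a restricted structure given by a map sq : 𝔤 → 𝔤 satisfying sq(c·x) = c²·sq(x), sq(x + y) = sq(x) + sq(y) + [x, y], and [sq(x), y] = [x, [x, y]] for all x, y ∈ 𝔤 and c ∈ k. Assume every element of 𝔤 is 2-closed, i.e. sq(x) ∈ k·x for all x ∈ 𝔤. Then 𝔤 has a basis {ξ, η} such that either (a) [ξ, η] = ξ, sq(ξ) = 0 and sq(η) = η (the restricted Lie algebra of the height-one part of the affine group of the line), or (b) [ξ, η] = 0 and sq(ξ) = sq(η) = 0 (the restricted Lie algebra of α₂ × α₂). -/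

import Mathlib

/-- **Classification of 2-dimensional restricted Lie algebras all of whose elements are
2-closed.** Over an algebraically closed field `k` of characteristic `2`, a `2`-dimensional
restricted Lie algebra (`2`-Lie algebra) `𝔤` in which every element is `2`-closed has a basis
`{ξ, η}` with either `[ξ,η] = ξ`, `sq ξ = 0`, `sq η = η` (the restricted Lie algebra of the
height-one part of the affine group of the line), or `[ξ,η] = 0`, `sq ξ = sq η = 0`
(the restricted Lie algebra of `α₂ × α₂`). -/
theorem two_dimensional_restricted_lie_algebra_all_two_closed
    {k : Type*} [Field k] [IsAlgClosed k] [CharP k 2]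
    {𝔤 : Type*} [LieRing 𝔤] [LieAlgebra k 𝔤] [FiniteDimensional k 𝔤]
    (hdim : Module.finrank k 𝔤 = 2)
    (sq : 𝔤 → 𝔤)
    (hsq_smul : ∀ (c : k) (x : 𝔤), sq (c • x) = (c ^ 2) • sq x)
    (hsq_add : ∀ x y : 𝔤, sq (x + y) = sq x + sq y + ⁅x, y⁆)
    (hsq_ad : ∀ x y : 𝔤, ⁅sq x, y⁆ = ⁅x, ⁅x, y⁆⁆)
    (hclosed : ∀ x : 𝔤, ∃ c : k, sq x = c • x) :
    ∃ b : Module.Basis (Fin 2) k 𝔤,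
      (⁅b 0, b 1⁆ = b 0 ∧ sq (b 0) = 0 ∧ sq (b 1) = b 1) ∨
      (⁅b 0, b 1⁆ = 0 ∧ sq (b 0) = 0 ∧ sq (b 1) = 0) := by
  classical
  have hneg : ∀ v : 𝔤, -v = v := by
    intro v
    have h2 : v + v = 0 := by
      have : ((2 : k)) • v = 0 := by
        rw [show ((2 : k)) = 0 from CharTwo.two_eq_zero, zero_smul]
      simpa [two_smul] using this
    exact neg_eq_of_add_eq_zero_left h2
  set B : Module.Basis (Fin 2) k 𝔤 := Module.finBasisOfFinrankEq k 𝔤 hdim with hB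
  set e := B 0 with he
  set f := B 1 with hf
  have key : ∀ x y : k, x • e + y • f = 0 → x = 0 ∧ y = 0 := by
    intro x y hxy
    have h := Fintype.linearIndependent_iff.mp B.linearIndependent ![x, y]
      (by rw [Fin.sum_univ_two]; simpa using hxy)
    exact ⟨h 0, h 1⟩
  by_cases habel : ⁅e, f⁆ = 0
  · -- abelian case
    obtain ⟨a, ha⟩ := hclosed e
    obtain ⟨b0, hb⟩ := hclosed f
    obtain ⟨c, hc⟩ := hclosed (e + f)
    -- get a = b0 = c
    have h1 : a • e + b0 • f = c • e + c • f := by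
      have := hsq_add e f
      rw [habel, add_zero, ha, hb] at this
      rw [← this, hc, smul_add]
    have h1' := key (a - c) (b0 - c)
      (by rw [sub_smul, sub_smul, sub_add_sub_comm, h1, sub_self])
    have hac : a = c := sub_eq_zero.mp h1'.1
    have hbc : b0 = c := sub_eq_zero.mp h1'.2
    -- pick t ≠ 0, 1
    obtain ⟨t, ht⟩ := Infinite.exists_notMem_finset ({0, 1} : Finset k)
    simp only [Finset.mem_insert, Finset.mem_singleton] at ht
    push_neg at ht
    obtain ⟨ht0, ht1⟩ := ht
    obtain ⟨c', hc'⟩ := hclosed (e + t • f)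
    have h2 : a • e + (t ^ 2 * b0) • f = c' • e + (c' * t) • f := by
      have := hsq_add e (t • f)
      rw [lie_smul, habel, smul_zero, add_zero, ha, hsq_smul, hb, smul_smul] at this
      rw [← this, hc', smul_add, smul_smul]
    have h2' := key (a - c') (t ^ 2 * b0 - c' * t)
      (by rw [sub_smul, sub_smul, sub_add_sub_comm, h2, sub_self])
    have hac' : a = c' := sub_eq_zero.mp h2'.1
    have ht2 : t ^ 2 * b0 = c' * t := sub_eq_zero.mp h2'.2
    -- so t^2 * a = a * t, hence a = 0
    have ha0 : a = 0 := by
      have : a * (t * (t - 1)) = 0 := by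
        rw [hbc, ← hac] at ht2
        rw [← hac'] at ht2
        ring_nf
        ring_nf at ht2
        linear_combination ht2
      exact (mul_eq_zero.mp this).resolve_right
        (mul_ne_zero ht0 (sub_ne_zero.mpr ht1))
    refine ⟨B, Or.inr ⟨habel, ?_, ?_⟩⟩
    · rw [← he, ha, ha0, zero_smul]
    · rw [← hf, hb, hbc, ← hac, ha0, zero_smul]
  · -- non-abelian case
    set ξ := ⁅e, f⁆ with hξdef
    have hξ : ξ ≠ 0 := habel
    have hrepr : B.repr ξ 0 • e + B.repr ξ 1 • f = ξ := by
      have := B.sum_repr ξ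
      rwa [Fin.sum_univ_two] at this
    have hfe : ⁅f, e⁆ = ξ := by rw [← lie_skew, hneg]
    -- bracket of ξ with e and f
    have hbe : ⁅ξ, e⁆ = (B.repr ξ 1) • ξ := by
      conv_lhs => rw [← hrepr]
      rw [add_lie, smul_lie, smul_lie, lie_self, smul_zero, zero_add, hfe]
    have hbf : ⁅ξ, f⁆ = (B.repr ξ 0) • ξ := by
      conv_lhs => rw [← hrepr]
      rw [add_lie, smul_lie, smul_lie, lie_self, smul_zero, add_zero]
    -- find w, c with c ≠ 0 and ⁅ξ, w⁆ = c • ξ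
    have hwc : ∃ (w : 𝔤) (c : k), c ≠ 0 ∧ ⁅ξ, w⁆ = c • ξ := by
      by_cases h0 : B.repr ξ 1 = 0
      · refine ⟨f, B.repr ξ 0, ?_, hbf⟩
        intro h1
        apply hξ
        rw [← hrepr, h0, h1, zero_smul, zero_smul, add_zero]
      · exact ⟨e, B.repr ξ 1, h0, hbe⟩
    obtain ⟨w, c, hc, hbw⟩ := hwc
    set η := c⁻¹ • w with hη
    have hbη : ⁅ξ, η⁆ = ξ := by
      rw [hη, lie_smul, hbw, smul_smul, inv_mul_cancel₀ hc, one_smul]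
    have hli : LinearIndependent k ![ξ, η] := by
      rw [LinearIndependent.pair_iff]
      intro s t hst
      have h1 : t • ξ = 0 := by
        have := congrArg (fun z => ⁅ξ, z⁆) hst
        simpa [lie_add, lie_smul, hbη] using this
      have ht : t = 0 := by
        rcases smul_eq_zero.mp h1 with h | h
        · exact h
        · exact absurd h hξ
      have hs : s = 0 := by
        rw [ht, zero_smul, add_zero] at hst
        rcases smul_eq_zero.mp hst with h | h
        · exact h
        · exact absurd h hξ
      exact ⟨hs, ht⟩
    have hcard : Fintype.card (Fin 2) = Module.finrank k 𝔤 := by simp [hdim]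
    set b := basisOfLinearIndependentOfCardEqFinrank hli hcard with hb
    have hb0 : b 0 = ξ := by
      rw [hb, coe_basisOfLinearIndependentOfCardEqFinrank]; rfl
    have hb1 : b 1 = η := by
      rw [hb, coe_basisOfLinearIndependentOfCardEqFinrank]; rfl
    -- sq ξ = 0
    obtain ⟨a, ha⟩ := hclosed ξ
    have ha0 : a = 0 := by
      have h := hsq_ad ξ η
      rw [ha, smul_lie, hbη, lie_self] at h
      rcases smul_eq_zero.mp h with h' | h'
      · exact h'
      · exact absurd h' hξ
    -- sq η = η
    obtain ⟨d, hd⟩ := hclosed η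
    have hηξ : ⁅η, ξ⁆ = ξ := by rw [← lie_skew, hbη, hneg]
    have hd1 : d = 1 := by
      have h := hsq_ad η ξ
      rw [hd, smul_lie, hηξ, hηξ] at h
      have : (d - 1) • ξ = 0 := by rw [sub_smul, one_smul, h, sub_self]
      rcases smul_eq_zero.mp this with h' | h'
      · exact sub_eq_zero.mp h'
      · exact absurd h' hξ
    refine ⟨b, Or.inl ⟨?_, ?_, ?_⟩⟩
    · rw [hb0, hb1, hbη]
    · rw [hb0, ha, ha0, zero_smul]
    · rw [hb1, hd, hd1, one_smul]
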